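/- Let T be the classical staircase transformation (cutting sequence r_n = n, normalized to domain [0,1)), let q ∈ (0,1) be irrational, let f be the 2-wise constant roof with values 1 on the non-spacer interval and q on the spacer interval, and let (φ_t) be the suspension flow over T under f on X. Then there exists m_0 (depending only on q) such that for every m ≥ m_0, every level I^{(m)} of the stage-m column of T, and every t ≥ 0, the horizontal projections of the finitely many horizontal segments composing φ_t(I^{(m)} × {0}) are pairwise disjoint up to null sets; in particular λ(π_x(φ_t(I^{(m)} × {0}))) = λ(I^{(m)}). -/

import Mathlib

open MeasureTheory Filter

noncomputable section

/-- Birkhoff sums `S_n(x) = ∑_{i<n} f(T^i x)` of the roof function along the base map. -/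
def birk (T f : ℝ → ℝ) (n : ℕ) (x : ℝ) : ℝ :=
  ∑ i ∈ Finset.range n, f (T^[i] x)

/-- The suspension space `X = {(x,y) : x ∈ [0,1), 0 ≤ y < f x}`. -/
def suspSpace (f : ℝ → ℝ) : Set (ℝ × ℝ) :=
  {p : ℝ × ℝ | p.1 ∈ Set.Ico (0 : ℝ) 1 ∧ p.2 ∈ Set.Ico (0 : ℝ) (f p.1)}

/-- Two-dimensional Lebesgue measure restricted to the suspension space. -/
def suspMeasure (f : ℝ → ℝ) : Measure (ℝ × ℝ) :=
  volume.restrict (suspSpace f)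

/-- The invariant measure of the suspension flow, normalized to a probability measure. -/
def suspProb (f : ℝ → ℝ) : Measure (ℝ × ℝ) :=
  (suspMeasure f Set.univ)⁻¹ • suspMeasure f

attribute [local instance] Classical.propDecidable

/-- The suspension flow at time `t ≥ 0` over the base transformation `T` under the roof `f`:
`φ_t(x,y) = (T^n x, y + t − S_n(x))` where `n ≥ 0` is the unique integer with
`S_n(x) ≤ y + t < S_{n+1}(x)` (and the identity in the degenerate case where no such `n`
exists; for a roof bounded below by a positive constant such an `n` exists and is unique). -/
def flowPt (T f : ℝ → ℝ) (t : ℝ) (p : ℝ × ℝ) : ℝ × ℝ :=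
  if h : ∃ n : ℕ, birk T f n p.1 ≤ p.2 + t ∧ p.2 + t < birk T f (n + 1) p.1 then
    (T^[h.choose] p.1, p.2 + t - birk T f h.choose p.1)
  else p

/-- A staircase cutting-and-stacking transformation of `[0,1)` with cutting sequence `r`
(used from index `1`): starting from the base interval `J = [0, x0)` (a column of height `1`),
at stage `n+1` the stage-`n` column (a stack of `h n` intervals, the `i`-th of which is
`[pos n i, pos n i + w n)`) is cut into `r (n+1)` equal-width subcolumns; the `(j+1)`-st
subcolumn (for `0 ≤ j < r (n+1)`) receives `j` spacer levels on top, taken as fresh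
subintervals of the spacer interval `[x0, 1)`, and then the subcolumns are stacked in order.
`T` maps each level of each stage onto the level directly above it by translation, and the
construction is normalized so that the total length of all intervals used equals `1`. -/
structure Staircase where
  /-- the cutting sequence (used from index `1`) -/
  r : ℕ → ℕ
  /-- the right endpoint of the base interval; `[0, x0)` is the non-spacer interval and
  `[x0, 1)` is the spacer interval -/
  x0 : ℝ
  /-- the height of the stage-`n` column -/
  h : ℕ → ℕ
  /-- the common width of the levels of the stage-`n` column -/
  w : ℕ → ℝ
  /-- the left endpoint of the `i`-th level (from the bottom, `0`-indexed) of the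
  stage-`n` column -/
  pos : ℕ → ℕ → ℝ
  /-- the a.e.-defined limit transformation -/
  T : ℝ → ℝ
  r_pos : ∀ n : ℕ, 1 ≤ r (n + 1)
  x0_mem : x0 ∈ Set.Ioo (0 : ℝ) 1
  h_zero : h 0 = 1
  h_rec : ∀ n : ℕ, h (n + 1) = r (n + 1) * h n + r (n + 1) * (r (n + 1) - 1) / 2
  w_zero : w 0 = x0
  w_rec : ∀ n : ℕ, w (n + 1) = w n / (r (n + 1) : ℝ)
  pos_zero : pos 0 0 = 0
  level_subset : ∀ n : ℕ, ∀ i < h n,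
    Set.Ico (pos n i) (pos n i + w n) ⊆ Set.Ico (0 : ℝ) 1
  level_disjoint : ∀ n : ℕ, ∀ i < h n, ∀ j < h n, i ≠ j →
    Disjoint (Set.Ico (pos n i) (pos n i + w n)) (Set.Ico (pos n j) (pos n j + w n))
  /-- cutting: the `(j+1)`-st subcolumn of the stage-`n` column sits at heights
  `j * h n + j*(j-1)/2, …` of the stage-`(n+1)` column, and its `i`-th level is the `(j+1)`-st
  vertical slice of the `i`-th stage-`n` level -/
  cut : ∀ n : ℕ, ∀ j < r (n + 1), ∀ i < h n,
    pos (n + 1) (j * h n + j * (j - 1) / 2 + i) = pos n i + (j : ℝ) * w (n + 1)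
  /-- stacking: the `(j+1)`-st subcolumn carries exactly `j` spacer levels on top, all of them
  fresh subintervals of the spacer interval `[x0, 1)` -/
  spacer_mem : ∀ n : ℕ, ∀ j < r (n + 1), ∀ k < j,
    Set.Ico (pos (n + 1) (j * h n + j * (j - 1) / 2 + h n + k))
        (pos (n + 1) (j * h n + j * (j - 1) / 2 + h n + k) + w (n + 1))
      ⊆ Set.Ico x0 1
  /-- normalization: the total length of all intervals ever used equals `1` -/
  full : Filter.Tendsto (fun n : ℕ => (h n : ℝ) * w n) Filter.atTop (nhds 1)
  /-- `T` maps each level of each stage's column onto the level directly above it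
  by translation -/
  map_level : ∀ n : ℕ, ∀ i : ℕ, i + 1 < h n →
    ∀ x ∈ Set.Ico (pos n i) (pos n i + w n), T x = x + (pos n (i + 1) - pos n i)
  measurable_T : Measurable T
  /-- `T` preserves Lebesgue measure on `[0,1)` -/
  measurePreserving_T : MeasurePreserving T
    (volume.restrict (Set.Ico (0 : ℝ) 1)) (volume.restrict (Set.Ico (0 : ℝ) 1))

/-- The `i`-th level (from the bottom) of the stage-`n` column. -/
def Staircase.level (s : Staircase) (n i : ℕ) : Set ℝ :=
  Set.Ico (s.pos n i) (s.pos n i + s.w n)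

/-- `T` is strongly mixing as a Lebesgue-measure-preserving transformation of `[0,1)`:
`λ(T^{-n} A ∩ B) → λ(A)·λ(B)` for all measurable `A, B ⊆ [0,1)`. -/
def Staircase.MixingT (s : Staircase) : Prop :=
  ∀ A B : Set ℝ, MeasurableSet A → MeasurableSet B →
    A ⊆ Set.Ico (0 : ℝ) 1 → B ⊆ Set.Ico (0 : ℝ) 1 →
    Filter.Tendsto (fun n : ℕ => volume.restrict (Set.Ico (0 : ℝ) 1) (s.T^[n] ⁻¹' A ∩ B))
      Filter.atTop (nhds (volume A * volume B))

/-- The 2-wise constant roof function, with value `p` on the non-spacer interval `[0, x0)`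
and value `q` on the spacer interval `[x0, 1)`. -/
def roof (x0 p q : ℝ) : ℝ → ℝ := fun x => if x < x0 then p else q

/-- The one-dimensional measure (total length) of a subset of the plane which is a finite
union of horizontal segments. -/
def horizMeasure (S : Set (ℝ × ℝ)) : ENNReal :=
  ∑' z : ℝ, volume {x : ℝ | (x, z) ∈ S}

/-- The set of heights `H_t(I, J', [a,b])`: those `z ∈ [a,b]` such that some point of
`I × {0}` has, at time `t` of the suspension flow, vertical coordinate `z` and horizontal
coordinate in `J'`. -/
def heightSet (T f : ℝ → ℝ) (t : ℝ) (I J' : Set ℝ) (a b : ℝ) : Set ℝ :=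
  {z : ℝ | z ∈ Set.Icc a b ∧
    ∃ y ∈ I, (flowPt T f t (y, 0)).2 = z ∧ (flowPt T f t (y, 0)).1 ∈ J'}

end
noncomputable section
namespace StairAux
variable (s : Staircase)

lemma w_pos : ∀ n, 0 < s.w n := by
  intro n
  induction n with
  | zero => rw [s.w_zero]; exact s.x0_mem.1
  | succ n ih =>
      rw [s.w_rec]
      have : (0:ℝ) < (s.r (n+1) : ℝ) := by
        exact_mod_cast Nat.lt_of_lt_of_le Nat.zero_lt_one (s.r_pos n)
      positivity

lemma h_pos : ∀ n, 1 ≤ s.h n := by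
  intro n
  induction n with
  | zero => rw [s.h_zero]
  | succ n ih =>
      rw [s.h_rec]
      have := s.r_pos n
      calc 1 ≤ s.r (n+1) * s.h n := Nat.one_le_iff_ne_zero.mpr (by positivity)
        _ ≤ _ := Nat.le_add_right _ _

lemma width_mul (n : ℕ) : (s.r (n+1) : ℝ) * s.w (n+1) = s.w n := by
  rw [s.w_rec]
  have : (s.r (n+1) : ℝ) ≠ 0 := by
    have := s.r_pos n; positivity
  field_simp

/-- block start indices -/
def blk (n j : ℕ) : ℕ := j * s.h n + j * (j - 1) / 2

lemma tri (j : ℕ) : (j+1) * j / 2 = j * (j-1) / 2 + j := by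
  cases j with
  | zero => rfl
  | succ k =>
      have h1 : (k+1+1) * (k+1) = (k+1) * k + 2 * (k+1) := by ring
      show (k+1+1) * (k+1) / 2 = _
      rw [h1, Nat.add_mul_div_left _ _ (by norm_num : 0 < 2)]
      simp

lemma blk_zero (n : ℕ) : blk s n 0 = 0 := by simp [blk]

lemma blk_succ (n j : ℕ) : blk s n (j+1) = blk s n j + s.h n + j := by
  unfold blk
  rw [show (j+1) * ((j+1) - 1) / 2 = (j+1) * j / 2 from rfl, tri]
  ring

lemma blk_h (n : ℕ) : s.h (n+1) = blk s n (s.r (n+1)) := s.h_rec n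

lemma blk_add_mul (n j : ℕ) : ∀ k, blk s n j + k * s.h n ≤ blk s n (j + k) := by
  intro k
  induction k with
  | zero => simp
  | succ k ih =>
      rw [show j + (k+1) = (j+k)+1 from rfl]
      have hb := blk_succ s n (j + k)
      have h1 := h_pos s n
      have h2 : (k+1) * s.h n = k * s.h n + s.h n := by ring
      omega

lemma blk_mono (n : ℕ) {j k : ℕ} (hjk : j ≤ k) : blk s n j ≤ blk s n k := by
  have := blk_add_mul s n j (k - j)
  have h1 := h_pos s n
  have h2 : j + (k - j) = k := by omega
  rw [h2] at this
  exact le_trans (Nat.le_add_right _ _) this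

lemma decomp_exists {n u : ℕ} (hu : u < s.h (n+1)) :
    ∃ j < s.r (n+1), ∃ v < s.h n + j, u = blk s n j + v := by
  rw [blk_h] at hu
  -- find block
  have key : ∀ J, u < blk s n J → ∃ j < J, blk s n j ≤ u ∧ u < blk s n (j+1) := by
    intro J
    induction J with
    | zero => intro h; simp [blk_zero] at h
    | succ J ih =>
        intro h
        by_cases hJ : u < blk s n J
        · obtain ⟨j, hj, h1, h2⟩ := ih hJ
          exact ⟨j, Nat.lt_succ_of_lt hj, h1, h2⟩
        · exact ⟨J, Nat.lt_succ_self J, Nat.le_of_not_lt hJ, h⟩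
  obtain ⟨j, hj, h1, h2⟩ := key _ hu
  refine ⟨j, hj, u - blk s n j, ?_, by omega⟩
  have := blk_succ s n j
  omega

lemma decomp_unique {n j j' v v' : ℕ} (hv : v < s.h n + j) (hv' : v' < s.h n + j')
    (heq : blk s n j + v = blk s n j' + v') : j = j' ∧ v = v' := by
  rcases lt_trichotomy j j' with h | h | h
  · exfalso
    have h1 : blk s n (j+1) ≤ blk s n j' := blk_mono s n h
    have h2 := blk_succ s n j
    omega
  · subst h; omega
  · exfalso
    have h1 : blk s n (j'+1) ≤ blk s n j := blk_mono s n h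
    have h2 := blk_succ s n j'
    omega


lemma level_nonempty (n i : ℕ) : (s.level n i).Nonempty :=
  ⟨s.pos n i, le_refl _, by linarith [w_pos s n]⟩

lemma eq_of_mem_mem {n i j x} (hi : i < s.h n) (hj : j < s.h n)
    (hxi : x ∈ s.level n i) (hxj : x ∈ s.level n j) : i = j := by
  by_contra hne
  exact Set.not_disjoint_iff.mpr ⟨x, hxi, hxj⟩ (s.level_disjoint n i hi j hj hne)

lemma slice_pos {n j i : ℕ} (hj : j < s.r (n+1)) (hi : i < s.h n) :
    s.pos (n+1) (blk s n j + i) = s.pos n i + (j : ℝ) * s.w (n+1) :=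
  s.cut n j hj i hi

lemma slice_subset {n j i : ℕ} (hj : j < s.r (n+1)) (hi : i < s.h n) :
    s.level (n+1) (blk s n j + i) ⊆ s.level n i := by
  intro x hx
  rw [Staircase.level, slice_pos s hj hi] at hx
  have hw := w_pos s (n+1)
  have hrw := width_mul s n
  have hjr : (j : ℝ) + 1 ≤ (s.r (n+1) : ℝ) := by exact_mod_cast hj
  constructor
  · have : (0:ℝ) ≤ (j:ℝ) * s.w (n+1) := by positivity
    linarith [hx.1]
  · have h2 : ((j:ℝ) + 1) * s.w (n+1) ≤ (s.r (n+1) : ℝ) * s.w (n+1) := by nlinarith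
    nlinarith [hx.2]

lemma slice_index_lt {n j i : ℕ} (hj : j < s.r (n+1)) (hi : i < s.h n) :
    blk s n j + i < s.h (n+1) := by
  have h1 := blk_succ s n j
  have h2 : blk s n (j+1) ≤ blk s n (s.r (n+1)) := blk_mono s n hj
  have h3 := blk_h s n
  omega

lemma mem_slice {n i : ℕ} (hi : i < s.h n) {x : ℝ} (hx : x ∈ s.level n i) :
    ∃ j < s.r (n+1), x ∈ s.level (n+1) (blk s n j + i) := by
  have hw := w_pos s (n+1)
  have hrw := width_mul s n
  obtain ⟨h1, h2⟩ := hx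
  set d := x - s.pos n i with hd
  have hd0 : 0 ≤ d := by simp [hd]; linarith
  refine ⟨⌊d / s.w (n+1)⌋₊, ?_, ?_⟩
  · have : d / s.w (n+1) < (s.r (n+1) : ℝ) := by
      rw [div_lt_iff₀ hw]
      have : d < s.w n := by simp [hd]; linarith
      linarith [hrw]
    exact_mod_cast Nat.floor_lt (by positivity) |>.mpr this
  · rw [Staircase.level, slice_pos s (by
      have : d / s.w (n+1) < (s.r (n+1) : ℝ) := by
        rw [div_lt_iff₀ hw]
        have : d < s.w n := by simp [hd]; linarith
        linarith [hrw]
      exact_mod_cast Nat.floor_lt (by positivity) |>.mpr this) hi]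
    constructor
    · have := Nat.floor_le (show 0 ≤ d / s.w (n+1) by positivity)
      have h3 : (⌊d / s.w (n+1)⌋₊ : ℝ) * s.w (n+1) ≤ d := by
        rw [← le_div_iff₀ hw]; exact this
      linarith
    · have := Nat.lt_floor_add_one (d / s.w (n+1))
      have h3 : d < ((⌊d / s.w (n+1)⌋₊ : ℝ) + 1) * s.w (n+1) := by
        rw [← div_lt_iff₀ hw]; exact this
      simp only [hd] at h3 ⊢
      nlinarith


lemma tower (m i : ℕ) (him : i < s.h m) : ∀ d : ℕ,
    (∀ l, l < s.h (m+d) →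
      (s.level (m+d) l ⊆ s.level m i ∨ Disjoint (s.level (m+d) l) (s.level m i)))
    ∧ (∀ l, l < s.h (m+d) → s.level (m+d) l ⊆ s.level m i →
        i ≤ l ∧ l + s.h m ≤ s.h (m+d) + i)
    ∧ (∀ l l', l < s.h (m+d) → l' < s.h (m+d) → s.level (m+d) l ⊆ s.level m i →
        s.level (m+d) l' ⊆ s.level m i → l < l' → l + s.h m ≤ l')
    ∧ (∀ x ∈ s.level m i, ∃ l, l < s.h (m+d) ∧ x ∈ s.level (m+d) l ∧
        s.level (m+d) l ⊆ s.level m i) := by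
  intro d
  induction d with
  | zero =>
      simp only [Nat.add_zero]
      refine ⟨?_, ?_, ?_, ?_⟩
      · intro l hl
        by_cases hli : l = i
        · subst hli; exact Or.inl (subset_refl _)
        · exact Or.inr (s.level_disjoint m l hl i him hli)
      · intro l hl hsub
        have hli : l = i := by
          by_contra hne
          obtain ⟨x, hx⟩ := level_nonempty s m l
          exact Set.not_disjoint_iff.mpr ⟨x, hx, hsub hx⟩
            (s.level_disjoint m l hl i him hne)
        omega
      · intro l l' hl hl' hs hs' hll
        have h1 : l = i := by
          by_contra hne
          obtain ⟨x, hx⟩ := level_nonempty s m l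
          exact Set.not_disjoint_iff.mpr ⟨x, hx, hs hx⟩
            (s.level_disjoint m l hl i him hne)
        have h2 : l' = i := by
          by_contra hne
          obtain ⟨x, hx⟩ := level_nonempty s m l'
          exact Set.not_disjoint_iff.mpr ⟨x, hx, hs' hx⟩
            (s.level_disjoint m l' hl' i him hne)
        omega
      · intro x hx
        exact ⟨i, him, hx, subset_refl _⟩
  | succ d ih =>
      obtain ⟨ihD, ihB, ihG, ihR⟩ := ih
      set M := m + d with hM
      have hstep : m + (d+1) = M + 1 := rfl
      rw [hstep]
      -- key: structure of a sublevel of level m i at stage M+1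
      have key : ∀ u, u < s.h (M+1) → s.level (M+1) u ⊆ s.level m i →
          ∃ j v, j < s.r (M+1) ∧ v < s.h M ∧ u = blk s M j + v ∧
            s.level M v ⊆ s.level m i ∧ i ≤ v ∧ v + s.h m ≤ s.h M + i := by
        intro u hu hsub
        obtain ⟨j, hj, v, hv, huv⟩ := decomp_exists s hu
        by_cases hvh : v < s.h M
        · have hsl : s.level (M+1) u ⊆ s.level M v := by
            rw [huv]; exact slice_subset s hj hvh
          obtain ⟨x, hx⟩ := level_nonempty s (M+1) u
          have hMv : s.level M v ⊆ s.level m i := by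
            rcases ihD v hvh with h | h
            · exact h
            · exact absurd h (Set.not_disjoint_iff.mpr ⟨x, hsl hx, hsub hx⟩)
          obtain ⟨h1, h2⟩ := ihB v hvh hMv
          exact ⟨j, v, hj, hvh, huv, hMv, h1, h2⟩
        · exfalso
          -- spacer level: disjoint from level m i
          obtain ⟨x, hx⟩ := level_nonempty s (M+1) u
          have hxi : x ∈ s.level m i := hsub hx
          obtain ⟨v'', hv''h, hxv'', hv''sub⟩ := ihR x hxi
          obtain ⟨j'', hj'', hxs⟩ := mem_slice s hv''h hxv''
          have hidx : u = blk s M j'' + v'' := by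
            rw [huv]
            exact eq_of_mem_mem s (by rw [← huv]; exact hu)
              (slice_index_lt s hj'' hv''h) (by rw [← huv]; exact hx) hxs
          rw [huv] at hidx
          obtain ⟨hje, hve⟩ := decomp_unique s hv (by omega : v'' < s.h M + j'') hidx
          omega
      refine ⟨?_, ?_, ?_, ?_⟩
      · -- dichotomy
        intro u hu
        obtain ⟨j, hj, v, hv, huv⟩ := decomp_exists s hu
        by_cases hvh : v < s.h M
        · have hsl : s.level (M+1) u ⊆ s.level M v := by
            rw [huv]; exact slice_subset s hj hvh
          rcases ihD v hvh with h | h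
          · exact Or.inl (hsl.trans h)
          · exact Or.inr (Disjoint.mono_left hsl h)
        · right
          rw [Set.disjoint_left]
          intro x hx hxi
          obtain ⟨v'', hv''h, hxv'', hv''sub⟩ := ihR x hxi
          obtain ⟨j'', hj'', hxs⟩ := mem_slice s hv''h hxv''
          have hidx : u = blk s M j'' + v'' :=
            eq_of_mem_mem s hu (slice_index_lt s hj'' hv''h) hx hxs
          rw [huv] at hidx
          obtain ⟨hje, hve⟩ := decomp_unique s hv (by omega : v'' < s.h M + j'') hidx
          omega
      · -- bounds
        intro u hu hsub
        obtain ⟨j, v, hj, hv, huv, hMv, h1, h2⟩ := key u hu hsub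
        constructor
        · omega
        · have hb1 := blk_succ s M j
          have hb2 : blk s M (j+1) ≤ blk s M (s.r (M+1)) := blk_mono s M hj
          have hb3 := blk_h s M
          omega
      · -- gap
        intro u u' hu hu' hs hs' huu
        obtain ⟨j, v, hj, hv, huv, hMv, h1, h2⟩ := key u hu hs
        obtain ⟨j', v', hj', hv', huv', hMv', h1', h2'⟩ := key u' hu' hs'
        rcases lt_trichotomy j j' with h | h | h
        · have hb1 := blk_succ s M j
          have hb2 : blk s M (j+1) ≤ blk s M j' := blk_mono s M h
          omega
        · subst h
          have hvv : v < v' := by omega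
          have := ihG v v' hv hv' hMv hMv' hvv
          omega
        · exfalso
          have hb1 := blk_succ s M j'
          have hb2 : blk s M (j'+1) ≤ blk s M j := blk_mono s M h
          omega
      · -- R
        intro x hx
        obtain ⟨v, hvh, hxv, hvsub⟩ := ihR x hx
        obtain ⟨j, hj, hxs⟩ := mem_slice s hvh hxv
        exact ⟨blk s M j + v, slice_index_lt s hj hvh, hxs,
          (slice_subset s hj hvh).trans hvsub⟩

lemma sub_of_mem_mem {m i M l : ℕ} (him : i < s.h m) (hmM : m ≤ M) (hl : l < s.h M)
    {x : ℝ} (hxl : x ∈ s.level M l) (hxi : x ∈ s.level m i) :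
    s.level M l ⊆ s.level m i := by
  obtain ⟨hD, _, _, _⟩ := tower s m i him (M - m)
  rw [show m + (M - m) = M by omega] at hD
  rcases hD l hl with h | h
  · exact h
  · exact absurd h (Set.not_disjoint_iff.mpr ⟨x, hxl, hxi⟩)

lemma gap {m i M l l' : ℕ} (him : i < s.h m) (hmM : m ≤ M) (hl : l < s.h M)
    (hl' : l' < s.h M) (hs : s.level M l ⊆ s.level m i) (hs' : s.level M l' ⊆ s.level m i)
    (hll : l < l') : l + s.h m ≤ l' := by
  obtain ⟨_, _, hG, _⟩ := tower s m i him (M - m)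
  rw [show m + (M - m) = M by omega] at hG
  exact hG l l' hl hl' hs hs' hll


section Classical

lemma h_ge_self (hcl : ∀ n : ℕ, s.r (n + 1) = n + 1) (m : ℕ) (hm : 1 ≤ m) : m ≤ s.h m := by
  cases m with
  | zero => omega
  | succ k =>
      rw [s.h_rec, hcl]
      have h1 := h_pos s k
      have : (k+1) * 1 ≤ (k+1) * s.h k := Nat.mul_le_mul_left _ h1
      omega

lemma headroom_push (hcl : ∀ n : ℕ, s.r (n + 1) = n + 1) {N l d : ℕ} {x : ℝ} (hx : x ∈ s.level N l) (hd : l + d < s.h N) :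
    ∃ l', x ∈ s.level (N+1) l' ∧ l' + (d + N) < s.h (N+1) := by
  obtain ⟨j, hj, hxs⟩ := mem_slice s (by omega : l < s.h N) hx
  rw [hcl] at hj
  refine ⟨blk s N j + l, hxs, ?_⟩
  have e1 := blk_succ s N j
  have e2 := blk_add_mul s N (j+1) (N-j)
  rw [show j+1+(N-j) = N+1 by omega] at e2
  have e3 := blk_h s N
  rw [hcl] at e3
  have e4 : (N - j) ≤ (N-j) * s.h N := Nat.le_mul_of_pos_right _ (h_pos s N)
  omega

lemma push_keep (hcl : ∀ n : ℕ, s.r (n + 1) = n + 1) {N l d : ℕ} {x : ℝ} (hx : x ∈ s.level N l) (hd : l + d < s.h N) :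
    ∃ l', x ∈ s.level (N+1) l' ∧ l' + d < s.h (N+1) := by
  obtain ⟨l', h1, h2⟩ := headroom_push s hcl hx hd
  exact ⟨l', h1, by omega⟩

lemma push_to (hcl : ∀ n : ℕ, s.r (n + 1) = n + 1) {N l d : ℕ} {x : ℝ} (hx : x ∈ s.level N l) (hd : l + d < s.h N)
    {M : ℕ} (hNM : N ≤ M) : ∃ l', x ∈ s.level M l' ∧ l' + d < s.h M := by
  induction M, hNM using Nat.le_induction with
  | base => exact ⟨l, hx, hd⟩
  | succ M hNM ih =>
      obtain ⟨l', h1, h2⟩ := ih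
      exact push_keep s hcl h1 h2

lemma headroom (hcl : ∀ n : ℕ, s.r (n + 1) = n + 1) {m i : ℕ} (him : i < s.h m) {y : ℝ} (hy : y ∈ s.level m i) (n : ℕ) :
    ∃ N l, m ≤ N ∧ y ∈ s.level N l ∧ l + n < s.h N := by
  induction n with
  | zero => exact ⟨m, i, le_refl m, hy, by omega⟩
  | succ n ih =>
      obtain ⟨N, l, hmN, h1, h2⟩ := ih
      obtain ⟨l1, h3, h4⟩ := headroom_push s hcl h1 h2
      obtain ⟨l2, h5, h6⟩ := headroom_push s hcl h3 h4
      refine ⟨N+2, l2, by omega, by rwa [show N+2 = N+1+1 from rfl], ?_⟩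
      rw [show N+2 = N+1+1 from rfl]
      omega

end Classical

lemma mem_translate {N l l' : ℕ} {x : ℝ} (hx : x ∈ s.level N l) :
    x + (s.pos N l' - s.pos N l) ∈ s.level N l' := by
  obtain ⟨h1, h2⟩ := hx
  exact ⟨by linarith, by linarith⟩

lemma iter_tr {N l : ℕ} {x : ℝ} (hx : x ∈ s.level N l) :
    ∀ k, l + k < s.h N → s.T^[k] x = x + (s.pos N (l+k) - s.pos N l) := by
  intro k
  induction k with
  | zero => intro _; simp
  | succ k ih =>
      intro hk
      have hk' : l + k < s.h N := by omega
      have e := ih hk'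
      have hmem : s.T^[k] x ∈ s.level N (l+k) := by
        rw [e]; exact mem_translate s hx
      rw [Function.iterate_succ_apply', s.map_level N (l+k) (by omega) _ hmem, e]
      have : l + (k+1) = (l+k) + 1 := rfl
      rw [this]; ring

lemma iter_mem {N l : ℕ} {x : ℝ} (hx : x ∈ s.level N l) {k : ℕ} (hk : l + k < s.h N) :
    s.T^[k] x ∈ s.level N (l+k) := by
  rw [iter_tr s hx k hk]; exact mem_translate s hx

end StairAux

namespace RoofAux
variable {x0 q : ℝ} (T : ℝ → ℝ)

lemma roof_pos (hq0 : 0 < q) (x : ℝ) : 0 < roof x0 1 q x := by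
  unfold roof; split
  · norm_num
  · exact hq0

lemma roof_ge (hq1 : q ≤ 1) (x : ℝ) : q ≤ roof x0 1 q x := by
  unfold roof; split <;> linarith

lemma roof_le (hq1 : q ≤ 1) (x : ℝ) : roof x0 1 q x ≤ 1 := by
  unfold roof; split <;> linarith

variable (f : ℝ → ℝ)

lemma birk_succ (n : ℕ) (x : ℝ) : birk T f (n+1) x = birk T f n x + f (T^[n] x) :=
  Finset.sum_range_succ _ _

lemma birk_zero (x : ℝ) : birk T f 0 x = 0 := rfl

lemma birk_strictMono (hf : ∀ x, 0 < f x) (x : ℝ) : StrictMono (fun n => birk T f n x) := by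
  apply strictMono_nat_of_lt_succ
  intro n
  rw [birk_succ]
  linarith [hf (T^[n] x)]

lemma birk_ge (hf : ∀ y, q ≤ f y) (n : ℕ) (x : ℝ) : (n : ℝ) * q ≤ birk T f n x := by
  induction n with
  | zero => simp [birk_zero]
  | succ n ih =>
      rw [birk_succ]
      push_cast
      linarith [hf (T^[n] x)]

lemma birk_add (k j : ℕ) (y : ℝ) :
    birk T f (k + j) y = birk T f j y + birk T f k (T^[j] y) := by
  induction k with
  | zero => simp [birk_zero]
  | succ k ih =>
      have : k + 1 + j = (k + j) + 1 := by omega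
      rw [this, birk_succ, ih, birk_succ, ← Function.iterate_add_apply]
      rw [show k + j = j + k from by omega]
      ring

lemma exists_flow_n (hf : ∀ x, 0 < f x) (hfq : ∀ y, q ≤ f y) (hq0 : 0 < q)
    {t : ℝ} (ht : 0 ≤ t) (y : ℝ) :
    ∃ n, birk T f n y ≤ t ∧ t < birk T f (n+1) y := by
  have hex : ∃ n : ℕ, t < birk T f n y := by
    obtain ⟨n, hn⟩ := exists_nat_gt (t / q)
    refine ⟨n, lt_of_lt_of_le ?_ (birk_ge T f hfq n y)⟩
    rwa [div_lt_iff₀ hq0] at hn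
  classical
  set n0 := Nat.find hex with hn0
  have hspec : t < birk T f n0 y := Nat.find_spec hex
  have hne : n0 ≠ 0 := by
    intro h
    rw [h, birk_zero] at hspec
    linarith
  refine ⟨n0 - 1, ?_, ?_⟩
  · have := Nat.find_min hex (m := n0 - 1) (by omega)
    linarith [not_lt.mp this]
  · rwa [show n0 - 1 + 1 = n0 by omega]

lemma flow_uniq (hf : ∀ x, 0 < f x) {t : ℝ} {y : ℝ} {n n' : ℕ}
    (h1 : birk T f n y ≤ t) (h2 : t < birk T f (n+1) y)
    (h1' : birk T f n' y ≤ t) (h2' : t < birk T f (n'+1) y) : n = n' := by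
  have hsm := birk_strictMono T f hf y
  rcases lt_trichotomy n n' with h | h | h
  · exfalso
    have : birk T f (n+1) y ≤ birk T f n' y := hsm.monotone (by omega)
    linarith
  · exact h
  · exfalso
    have : birk T f (n'+1) y ≤ birk T f n y := hsm.monotone (by omega)
    linarith

lemma flowPt_eval (hf : ∀ x, 0 < f x) {t : ℝ} {y : ℝ} {n : ℕ}
    (h1 : birk T f n y ≤ t) (h2 : t < birk T f (n+1) y) :
    flowPt T f t (y, 0) = (T^[n] y, t - birk T f n y) := by
  have hex : ∃ k : ℕ, birk T f k (y, (0:ℝ)).1 ≤ (y, (0:ℝ)).2 + t ∧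
      (y, (0:ℝ)).2 + t < birk T f (k+1) (y, (0:ℝ)).1 :=
    ⟨n, by simpa using h1, by simpa using h2⟩
  rw [flowPt, dif_pos hex]
  obtain ⟨ha, hb⟩ := hex.choose_spec
  have ha' : birk T f hex.choose y ≤ t := by simpa using ha
  have hb' : t < birk T f (hex.choose + 1) y := by simpa using hb
  have hc : hex.choose = n := flow_uniq T f hf ha' hb' h1 h2
  rw [hc]
  simp

end RoofAux

open StairAux RoofAux in
lemma core_lemma (s : Staircase) (hcl : ∀ n : ℕ, s.r (n + 1) = n + 1)
    {q : ℝ} (hq0 : 0 < q) (hq1 : q < 1)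
    {m i : ℕ} (him : i < s.h m) (hqh : 1 ≤ q * (s.h m : ℝ))
    {t y1 y2 : ℝ} (hy1 : y1 ∈ s.level m i) (hy2 : y2 ∈ s.level m i)
    {n1 n2 : ℕ} (h12 : n1 ≤ n2)
    (ha : birk s.T (roof s.x0 1 q) n1 y1 ≤ t)
    (hb : t < birk s.T (roof s.x0 1 q) (n1+1) y1)
    (hc : birk s.T (roof s.x0 1 q) n2 y2 ≤ t)
    (heq : s.T^[n1] y1 = s.T^[n2] y2) : y1 = y2 ∧ n1 = n2 := by
  obtain ⟨N1, a1', hmN1, hy1N, hl1⟩ := headroom s hcl him hy1 n2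
  obtain ⟨N2, a2', hmN2, hy2N, hl2⟩ := headroom s hcl him hy2 n2
  obtain ⟨a1, hy1', hl1'⟩ := push_to s hcl hy1N hl1 (le_max_left N1 N2)
  obtain ⟨a2, hy2', hl2'⟩ := push_to s hcl hy2N hl2 (le_max_right N1 N2)
  set N := max N1 N2 with hN
  have hmN : m ≤ N := le_trans hmN1 (le_max_left _ _)
  have ht1 : s.T^[n1] y1 ∈ s.level N (a1 + n1) := iter_mem s hy1' (by omega)
  have ht2 : s.T^[n2] y2 ∈ s.level N (a2 + n2) := iter_mem s hy2' hl2'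
  have hidx : a1 + n1 = a2 + n2 :=
    eq_of_mem_mem s (by omega) (by omega) (heq ▸ ht1) ht2
  have e1 : s.T^[n1] y1 = y1 + (s.pos N (a1+n1) - s.pos N a1) :=
    iter_tr s hy1' n1 (by omega)
  have e2 : s.T^[n2] y2 = y2 + (s.pos N (a2+n2) - s.pos N a2) :=
    iter_tr s hy2' n2 hl2'
  have hoff : y1 - s.pos N a1 = y2 - s.pos N a2 := by
    rw [hidx] at e1
    rw [heq, e2] at e1
    linarith
  have hsub1 : s.level N a1 ⊆ s.level m i := sub_of_mem_mem s him hmN (by omega) hy1' hy1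
  have hsub2 : s.level N a2 ⊆ s.level m i := sub_of_mem_mem s him hmN (by omega) hy2' hy2
  rcases lt_trichotomy a1 a2 with hlt | heqa | hgt
  · omega
  · constructor
    · rw [heqa] at hoff; linarith
    · omega
  · exfalso
    have hgap : a2 + s.h m ≤ a1 := gap s him hmN (by omega) (by omega) hsub2 hsub1 hgt
    set j := n2 - n1 with hj
    have hja : a2 + j = a1 := by omega
    have hTj : s.T^[j] y2 = y1 := by
      rw [iter_tr s hy2' j (by omega), hja]
      linarith
    have hco : birk s.T (roof s.x0 1 q) n2 y2
        = birk s.T (roof s.x0 1 q) j y2 + birk s.T (roof s.x0 1 q) n1 y1 := by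
      have h := birk_add s.T (roof s.x0 1 q) n1 j y2
      rw [hTj] at h
      rw [show n2 = n1 + j by omega]
      exact h
    have hge : (j:ℝ) * q ≤ birk s.T (roof s.x0 1 q) j y2 :=
      birk_ge s.T _ (roof_ge hq1.le) j y2
    have hhm : (s.h m : ℝ) ≤ (j : ℝ) := by exact_mod_cast by omega
    have hge1 : 1 ≤ birk s.T (roof s.x0 1 q) j y2 := by nlinarith
    have hfl : roof s.x0 1 q (s.T^[n1] y1) ≤ 1 := roof_le hq1.le _
    have hsucc := birk_succ s.T (roof s.x0 1 q) n1 y1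
    linarith


lemma roof_measurable (x0 p q : ℝ) : Measurable (roof x0 p q) := by
  unfold roof
  exact Measurable.ite (measurableSet_lt measurable_id measurable_const)
    measurable_const measurable_const

lemma birk_measurable {T f : ℝ → ℝ} (hT : Measurable T) (hf : Measurable f) (n : ℕ) :
    Measurable (fun y => birk T f n y) := by
  unfold birk
  exact Finset.measurable_sum _ (fun i _ => hf.comp (hT.iterate i))

/-- The set of points of the level whose flow-return index at time `t` is `n`. -/
def Aset (s : Staircase) (q t : ℝ) (m i n : ℕ) : Set ℝ :=
  {y | y ∈ s.level m i ∧ birk s.T (roof s.x0 1 q) n y ≤ t ∧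
    t < birk s.T (roof s.x0 1 q) (n+1) y}

lemma Aset_measurable (s : Staircase) (q t : ℝ) (m i n : ℕ) :
    MeasurableSet (Aset s q t m i n) := by
  have h1 := birk_measurable s.measurable_T (roof_measurable s.x0 1 q) n
  have h2 := birk_measurable s.measurable_T (roof_measurable s.x0 1 q) (n+1)
  have he : Aset s q t m i n = s.level m i ∩
      ((fun y => birk s.T (roof s.x0 1 q) n y) ⁻¹' Set.Iic t) ∩
      ((fun y => birk s.T (roof s.x0 1 q) (n+1) y) ⁻¹' Set.Ioi t) := by
    ext y
    simp only [Aset, Set.mem_setOf_eq, Set.mem_inter_iff, Set.mem_preimage,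
      Set.mem_Iic, Set.mem_Ioi]
    tauto
  rw [he]
  have hlev : MeasurableSet (s.level m i) := measurableSet_Ico
  exact (hlev.inter (h1 measurableSet_Iic)).inter (h2 measurableSet_Ioi)

open StairAux RoofAux in
lemma image_An (s : Staircase) (hcl : ∀ n : ℕ, s.r (n + 1) = n + 1)
    {q : ℝ} (hq0 : 0 < q) (hq1 : q < 1)
    {m i : ℕ} (him : i < s.h m) (hqh : 1 ≤ q * (s.h m : ℝ)) (t : ℝ) (n : ℕ) :
    MeasurableSet (s.T^[n] '' Aset s q t m i n) ∧
    volume (s.T^[n] '' Aset s q t m i n) = volume (Aset s q t m i n) := by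
  classical
  set A := Aset s q t m i n with hA
  set B : ℕ → Set ℝ := fun e =>
    if (Nat.unpair e).2 + n < s.h (Nat.unpair e).1 ∧
        s.level (Nat.unpair e).1 (Nat.unpair e).2 ⊆ s.level m i then
      A ∩ s.level (Nat.unpair e).1 (Nat.unpair e).2
    else ∅ with hB
  set c : ℕ → ℝ := fun e =>
    s.pos (Nat.unpair e).1 ((Nat.unpair e).2 + n) - s.pos (Nat.unpair e).1 (Nat.unpair e).2
    with hc
  have hBsubA : ∀ e, B e ⊆ A := by
    intro e
    simp only [hB]
    split
    · exact Set.inter_subset_left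
    · exact Set.empty_subset _
  have htr : ∀ e, ∀ y ∈ B e, s.T^[n] y = y + c e := by
    intro e y hy
    simp only [hB] at hy
    split at hy
    · next hce => exact iter_tr s hy.2 n hce.1
    · exact absurd hy (Set.notMem_empty y)
  have hAmeas : MeasurableSet A := Aset_measurable s q t m i n
  have hBmeas : ∀ e, MeasurableSet (B e) := by
    intro e
    simp only [hB]
    split
    · exact hAmeas.inter measurableSet_Ico
    · exact MeasurableSet.empty
  have hcover : ⋃ e, B e = A := by
    apply subset_antisymm
    · exact Set.iUnion_subset hBsubA
    · intro y hy
      obtain ⟨N, l, hmN, hyN, hl⟩ := headroom s hcl him hy.1 n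
      have hsub := sub_of_mem_mem s him hmN (by omega) hyN hy.1
      refine Set.mem_iUnion.mpr ⟨Nat.pair N l, ?_⟩
      simp only [hB, Nat.unpair_pair]
      rw [if_pos ⟨hl, hsub⟩]
      exact ⟨hy, hyN⟩
  have hinj : ∀ y1 ∈ A, ∀ y2 ∈ A, s.T^[n] y1 = s.T^[n] y2 → y1 = y2 := by
    intro y1 h1 y2 h2 he
    exact (core_lemma s hcl hq0 hq1 him hqh h1.1 h2.1 (le_refl n)
      h1.2.1 h1.2.2 h2.2.1 he).1
  set D := disjointed B with hD
  have hDmeas : ∀ e, MeasurableSet (D e) := MeasurableSet.disjointed hBmeas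
  have hDsub : ∀ e, D e ⊆ B e := disjointed_subset B
  have hDU : ⋃ e, D e = A := by rw [hD, iUnion_disjointed, hcover]
  have himgU : s.T^[n] '' A = ⋃ e, s.T^[n] '' D e := by
    rw [← hDU, Set.image_iUnion]
  have himg : ∀ e, s.T^[n] '' D e = (fun y => y + (-(c e))) ⁻¹' D e := by
    intro e
    rw [Set.image_congr (fun y hy => htr e y (hDsub e hy)), Set.image_add_right]
  have himgmeas : ∀ e, MeasurableSet (s.T^[n] '' D e) := by
    intro e
    rw [himg e]
    exact (hDmeas e).preimage (measurable_add_const _)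
  have himgvol : ∀ e, volume (s.T^[n] '' D e) = volume (D e) := by
    intro e
    rw [himg e]
    exact measure_preimage_add_right volume _ _
  have himgdisj : Pairwise (Function.onFun Disjoint fun e => s.T^[n] '' D e) := by
    intro e e' hne
    rw [Function.onFun, Set.disjoint_left]
    rintro x ⟨y, hy, rfl⟩ ⟨y', hy', hxe⟩
    have hyA := hBsubA e (hDsub e hy)
    have hy'A := hBsubA e' (hDsub e' hy')
    have : y' = y := hinj y' hy'A y hyA hxe
    subst this
    exact Set.disjoint_left.mp (disjoint_disjointed B hne) hy hy'
  constructor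
  · rw [himgU]
    exact MeasurableSet.iUnion himgmeas
  · rw [himgU, measure_iUnion himgdisj himgmeas]
    simp_rw [himgvol]
    rw [← measure_iUnion (disjoint_disjointed B) hDmeas, hDU]



open StairAux RoofAux in
/-- **Lemma (no horizontal overlap, classical staircase).** Let `T` be the classical
staircase, `q ∈ (0,1)` irrational, `f` the 2-wise constant roof with values `1` and `q`,
and `(φ_t)` the suspension flow. Then there is `m_0` (depending only on `q`) such that for
every `m ≥ m_0`, every level `I^{(m)}` of the stage-`m` column, and every `t ≥ 0`, the
horizontal projections of the horizontal segments composing `φ_t(I^{(m)} × {0})` are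
pairwise disjoint up to null sets; in particular
`λ(π_x(φ_t(I^{(m)} × {0}))) = λ(I^{(m)})`. -/
theorem horizontal_projections_disjoint_classical_staircase
    (s : Staircase) (hclassical : ∀ n : ℕ, s.r (n + 1) = n + 1)
    (q : ℝ) (hq0 : 0 < q) (hq1 : q < 1) (hirr : Irrational q) :
    ∃ m0 : ℕ, ∀ m ≥ m0, ∀ i < s.h m, ∀ t : ℝ, 0 ≤ t →
      (∀ z1 z2 : ℝ, z1 ≠ z2 →
        volume
          ({x : ℝ | (x, z1) ∈
              (fun x : ℝ => flowPt s.T (roof s.x0 1 q) t (x, 0)) '' s.level m i} ∩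
            {x : ℝ | (x, z2) ∈
              (fun x : ℝ => flowPt s.T (roof s.x0 1 q) t (x, 0)) '' s.level m i}) = 0) ∧
      volume (Prod.fst '' ((fun x : ℝ => flowPt s.T (roof s.x0 1 q) t (x, 0)) '' s.level m i))
        = volume (s.level m i) := by
  refine ⟨⌈q⁻¹⌉₊ + 1, ?_⟩
  intro m hm i him t ht
  set f := roof s.x0 1 q with hfdef
  have hfpos : ∀ x, 0 < f x := roof_pos hq0
  have hfge : ∀ x, q ≤ f x := roof_ge hq1.le
  have hqh : 1 ≤ q * (s.h m : ℝ) := by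
    have h1 : m ≤ s.h m := h_ge_self s hclassical m (by omega)
    have h3 : ((⌈q⁻¹⌉₊ + 1 : ℕ) : ℝ) ≤ (m : ℝ) := by exact_mod_cast hm
    have h4 : (m : ℝ) ≤ (s.h m : ℝ) := by exact_mod_cast h1
    have h5 : q⁻¹ ≤ (s.h m : ℝ) := by
      have h2 : (q⁻¹ : ℝ) ≤ (⌈q⁻¹⌉₊ : ℝ) := Nat.le_ceil _
      push_cast at h3
      linarith
    calc (1:ℝ) = q * q⁻¹ := (mul_inv_cancel₀ hq0.ne').symm
      _ ≤ q * (s.h m : ℝ) := by nlinarith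
  constructor
  · intro z1 z2 hz
    have hempty : {x : ℝ | (x, z1) ∈ (fun x : ℝ => flowPt s.T f t (x, 0)) '' s.level m i} ∩
        {x : ℝ | (x, z2) ∈ (fun x : ℝ => flowPt s.T f t (x, 0)) '' s.level m i} = ∅ := by
      rw [Set.eq_empty_iff_forall_notMem]
      rintro x ⟨hx1, hx2⟩
      simp only [Set.mem_setOf_eq, Set.mem_image] at hx1 hx2
      obtain ⟨y1, hy1, he1⟩ := hx1
      obtain ⟨y2, hy2, he2⟩ := hx2
      obtain ⟨k1, ha1, hb1⟩ := exists_flow_n s.T f hfpos hfge hq0 ht y1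
      obtain ⟨k2, ha2, hb2⟩ := exists_flow_n s.T f hfpos hfge hq0 ht y2
      rw [flowPt_eval s.T f hfpos ha1 hb1] at he1
      rw [flowPt_eval s.T f hfpos ha2 hb2] at he2
      obtain ⟨hxe1, hze1⟩ := Prod.ext_iff.mp he1
      obtain ⟨hxe2, hze2⟩ := Prod.ext_iff.mp he2
      simp only at hxe1 hze1 hxe2 hze2
      rcases le_total k1 k2 with hk | hk
      · obtain ⟨hyy, hnn⟩ := core_lemma s hclassical hq0 hq1 him hqh hy1 hy2 hk
          ha1 hb1 ha2 (hxe1.trans hxe2.symm)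
        apply hz
        rw [← hze1, ← hze2, hyy, hnn]
      · obtain ⟨hyy, hnn⟩ := core_lemma s hclassical hq0 hq1 him hqh hy2 hy1 hk
          ha2 hb2 ha1 (hxe2.trans hxe1.symm)
        apply hz
        rw [← hze1, ← hze2, hyy, hnn]
    rw [hempty]
    exact measure_empty
  · have himg_eq : Prod.fst '' ((fun x : ℝ => flowPt s.T f t (x, 0)) '' s.level m i)
        = ⋃ k, s.T^[k] '' Aset s q t m i k := by
      ext x
      constructor
      · rintro ⟨p, ⟨y, hy, rfl⟩, rfl⟩
        obtain ⟨k, ha, hb⟩ := exists_flow_n s.T f hfpos hfge hq0 ht y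
        refine Set.mem_iUnion.mpr ⟨k, ⟨y, ⟨hy, ha, hb⟩, ?_⟩⟩
        show s.T^[k] y = (flowPt s.T f t (y, 0)).1
        rw [flowPt_eval s.T f hfpos ha hb]
      · intro hx
        obtain ⟨k, hk⟩ := Set.mem_iUnion.mp hx
        obtain ⟨y, hyA, hxy⟩ := hk
        refine ⟨flowPt s.T f t (y, 0), ⟨y, hyA.1, rfl⟩, ?_⟩
        rw [flowPt_eval s.T f hfpos hyA.2.1 hyA.2.2]
        exact hxy
    have himn := fun k => image_An s hclassical hq0 hq1 him hqh t k
    have h120 : ∀ k, s.T^[k] '' Aset s q t m i k = s.T^[k] '' Aset s q t m i k := fun _ => rfl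
    have himdisj : Pairwise (Function.onFun Disjoint fun k => s.T^[k] '' Aset s q t m i k) := by
      intro k k' hne
      rw [Function.onFun, Set.disjoint_left]
      rintro x ⟨y, hyA, rfl⟩ ⟨y', hy'A, hxe⟩
      rcases le_total k k' with hk | hk
      · obtain ⟨_, hnn⟩ := core_lemma s hclassical hq0 hq1 him hqh hyA.1 hy'A.1 hk
          hyA.2.1 hyA.2.2 hy'A.2.1 hxe.symm
        exact hne hnn
      · obtain ⟨_, hnn⟩ := core_lemma s hclassical hq0 hq1 him hqh hy'A.1 hyA.1 hk
          hy'A.2.1 hy'A.2.2 hyA.2.1 hxe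
        exact hne hnn.symm
    have hAdisj : Pairwise (Function.onFun Disjoint fun k => Aset s q t m i k) := by
      intro k k' hne
      rw [Function.onFun, Set.disjoint_left]
      intro y h1 h2
      exact hne (flow_uniq s.T f hfpos h1.2.1 h1.2.2 h2.2.1 h2.2.2)
    have hAU : ⋃ k, Aset s q t m i k = s.level m i := by
      apply subset_antisymm
      · exact Set.iUnion_subset fun k y hy => hy.1
      · intro y hy
        obtain ⟨k, ha, hb⟩ := exists_flow_n s.T f hfpos hfge hq0 ht y
        exact Set.mem_iUnion.mpr ⟨k, hy, ha, hb⟩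
    rw [himg_eq, measure_iUnion himdisj (fun k => (himn k).1)]
    calc ∑' k, volume (s.T^[k] '' Aset s q t m i k)
        = ∑' k, volume (Aset s q t m i k) := tsum_congr fun k => (himn k).2
      _ = volume (⋃ k, Aset s q t m i k) :=
          (measure_iUnion hAdisj (fun k => Aset_measurable s q t m i k)).symm
      _ = volume (s.level m i) := by rw [hAU]
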